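/- Suppose the linear system α_i − α_j = y_{s(j)} − y_{p(i)}, for edges (r_i,r_j) of a reaction-to-reaction graph G^R, has a solution (α_1,...,α_r). Define a new CRN with reactions r'_k : y_{s(k)} + α_k → y_{p(k)} + α_k. Then this new CRN is a structural translation of the original (Γ' = Γ), and it is PS-compatible with G^R: for every edge (r_i,r_j) of G^R, the product complex of r'_i equals the source complex of r'_j. -/
import Mathlib

/-- **A solution of the translation system yields a PS-compatible structural
translation.**  Given reactions `r_k : src k → prod k` and a solution
`α_1, ..., α_r` of the system `α_i − α_j = src j − prod i` over the edges of a
reaction-to-reaction graph `E`, the translated CRN with reactions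
`r'_k : src k + α k → prod k + α k` has the same stoichiometric matrix
(`Γ' = Γ`, columnwise) and for every edge `(r_i, r_j)` the product complex of
`r'_i` equals the source complex of `r'_j`. -/
theorem translated_network_is_structural_translation_and_ps (m r : ℕ)
    (src prod : Fin r → Fin m → ℝ) (E : Fin r → Fin r → Prop)
    (α : Fin r → Fin m → ℝ)
    (hα : ∀ i j, E i j → α i - α j = src j - prod i) :
    (∀ k, (prod k + α k) - (src k + α k) = prod k - src k) ∧
    (∀ i j, E i j → prod i + α i = src j + α j) := by
  constructor
  · intro k; ring
  · intro i j hij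
    have h := hα i j hij
    have := congrArg (fun f => f + prod i + α j) h
    funext x
    have hx := congrFun h x
    simp only [Pi.sub_apply] at hx
    simp only [Pi.add_apply]
    linarith
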